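/- Let A be an n×n real matrix with A_{ii} = 1 for all i, and suppose there exists a vector h ∈ R^n with h_i > 0 for all i and h_i > Σ_{j≠i} h_j |A_{ij}| for every i (A has a dominant diagonal after scaling). Then A is a P-matrix. -/

import Mathlib

/-- A strictly row diagonally dominant real matrix (with positive diagonal) has positive
determinant. -/
lemma det_pos_of_dominant {m : Type*} [Fintype m] [DecidableEq m] (B : Matrix m m ℝ)
    (hB : ∀ i, ∑ j ∈ Finset.univ.erase i, |B i j| < B i i) : 0 < B.det := by
  set f : ℝ → Matrix m m ℝ := fun t => (1 - t) • (1 : Matrix m m ℝ) + t • B with hf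
  have hdiagpos : ∀ i, 0 < B i i := fun i =>
    lt_of_le_of_lt (Finset.sum_nonneg fun j _ => abs_nonneg _) (hB i)
  have hne : ∀ t ∈ Set.Icc (0:ℝ) 1, (f t).det ≠ 0 := by
    intro t ht
    apply det_ne_zero_of_sum_row_lt_diag
    intro k
    have hdk : f t k k = (1 - t) + t * B k k := by
      simp [hf, Matrix.one_apply]
    have hpos : 0 < (1 - t) + t * B k k := by
      rcases lt_or_eq_of_le ht.1 with h0 | h0
      · have := mul_pos h0 (hdiagpos k)
        nlinarith [ht.2]
      · simp [← h0]
    calc ∑ j ∈ Finset.univ.erase k, ‖f t k j‖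
        = ∑ j ∈ Finset.univ.erase k, t * |B k j| := by
          apply Finset.sum_congr rfl
          intro j hj
          have hjk : j ≠ k := Finset.ne_of_mem_erase hj
          simp [hf, Matrix.one_apply, Ne.symm hjk, Real.norm_eq_abs, abs_mul,
            abs_of_nonneg ht.1]
      _ = t * ∑ j ∈ Finset.univ.erase k, |B k j| := by rw [Finset.mul_sum]
      _ < (1 - t) + t * B k k := by
          rcases lt_or_eq_of_le ht.1 with h0 | h0
          · nlinarith [hB k, ht.2]
          · simp [← h0]
      _ ≤ ‖f t k k‖ := by rw [hdk, Real.norm_eq_abs]; exact le_abs_self _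
  have hcont : Continuous fun t => (f t).det := by
    apply Continuous.matrix_det
    exact ((continuous_const.sub continuous_id).smul continuous_const).add
      (continuous_id.smul continuous_const)
  have hf0 : (f 0).det = 1 := by simp [hf]
  have hf1 : (f 1).det = B.det := by simp [hf]
  by_contra hle
  push_neg at hle
  have h1lt : (f 1).det < 0 :=
    lt_of_le_of_ne (hf1 ▸ hle) (hne 1 (by norm_num))
  have : (0:ℝ) ∈ Set.Icc ((f 1).det) ((f 0).det) := ⟨le_of_lt h1lt, by rw [hf0]; norm_num⟩
  obtain ⟨c, hc, hc0⟩ := intermediate_value_Icc' (by norm_num : (0:ℝ) ≤ 1) (hcont.continuousOn) this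
  exact hne c hc hc0

/-- A square real matrix is a P-matrix if all of its principal minors are positive. -/
def IsPMatrix {n : ℕ} (A : Matrix (Fin n) (Fin n) ℝ) : Prop :=
  ∀ S : Finset (Fin n), S.Nonempty →
    0 < (A.submatrix (fun i : S => (i : Fin n)) (fun j : S => (j : Fin n))).det

/-- A matrix with unit diagonal and (scaled) dominant diagonal is a P-matrix. -/
theorem isPMatrix_of_dominant_diagonal {n : ℕ} (A : Matrix (Fin n) (Fin n) ℝ)
    (hdiag : ∀ i, A i i = 1)
    (h : ∃ hvec : Fin n → ℝ, (∀ i, 0 < hvec i) ∧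
      ∀ i, (∑ j ∈ Finset.univ.erase i, hvec j * |A i j|) < hvec i) :
    IsPMatrix A := by
  obtain ⟨hv, hvpos, hdom⟩ := h
  intro S _
  set C := A.submatrix (fun i : S => (i : Fin n)) (fun j : S => (j : Fin n)) with hC
  set B := C * Matrix.diagonal (fun j : S => hv j) with hBdef
  have hBdom : ∀ i : S, ∑ j ∈ Finset.univ.erase i, |B i j| < B i i := by
    intro i
    have hBij : ∀ j : S, |B i j| = hv j * |A i j| := by
      intro j
      rw [hBdef, Matrix.mul_diagonal]
      simp [hC, abs_mul, abs_of_pos (hvpos j), mul_comm]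
    have hBii : B i i = hv i := by
      rw [hBdef, Matrix.mul_diagonal]
      simp [hC, hdiag]
    rw [hBii]
    have e1 : ∑ j ∈ Finset.univ.erase i, |B i j| = (∑ j : S, hv j * |A i j|) - hv i := by
      rw [Finset.sum_congr rfl (fun j _ => hBij j),
        Finset.sum_erase_eq_sub (Finset.mem_univ i)]
      simp [hdiag]
    rw [e1]
    have e2 : (∑ j : S, hv (j : Fin n) * |A i (j : Fin n)|) = ∑ j ∈ S, hv j * |A i j| := by
      rw [Finset.univ_eq_attach]
      exact Finset.sum_attach S (fun j => hv j * |A (i : Fin n) j|)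
    have e3 : ∑ j ∈ S, hv j * |A (i : Fin n) j| ≤ ∑ j : Fin n, hv j * |A i j| :=
      Finset.sum_le_sum_of_subset_of_nonneg (Finset.subset_univ S)
        (fun j _ _ => mul_nonneg (hvpos j).le (abs_nonneg _))
    have e4 : (∑ j : Fin n, hv j * |A (i : Fin n) j|) =
        (∑ j ∈ Finset.univ.erase (i : Fin n), hv j * |A i j|) + hv i := by
      rw [Finset.sum_erase_eq_sub (Finset.mem_univ (i : Fin n))]
      simp [hdiag]
    have := hdom (i : Fin n)
    rw [e2]
    linarith
  have hBdet : 0 < B.det := det_pos_of_dominant B hBdom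
  have hmul : B.det = C.det * ∏ j : S, hv (j : Fin n) := by
    rw [hBdef, Matrix.det_mul, Matrix.det_diagonal]
  have hprod : 0 < ∏ j : S, hv (j : Fin n) := Finset.prod_pos fun j _ => hvpos _
  by_contra hle
  push_neg at hle
  nlinarith [hBdet, hmul, hprod]
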